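/- Let K be a field and x, y ∈ K with x ≠ 0 and y ≠ 0. Define binary operations on K by u | w = x⁻¹·(w − y·u) and u ∗ w = y⁻¹·(w − x·u), and set aₙ = (x + y)^(n−1) for n ≥ 1 (so a₁ = 1). Then (K; a₁, a₂, …, |, ∗) satisfies all seven Conway algebra axioms C1–C7. (Verification that the Jones–Conway (HOMFLY) algebra of Example 2.1.8 is a Conway algebra.) -/
import Mathlib


/-- Example 2.1.8: the Jones–Conway (HOMFLY) skein operations on a field,
`u | w = x⁻¹·(w − y·u)`, `u ∗ w = y⁻¹·(w − x·u)`, with basepoints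
`aₙ = (x+y)^(n−1)`, satisfy all seven Conway algebra axioms C1–C7. -/
theorem jonesConway_isConwayAlgebra {K : Type*} [Field K] (x y : K)
    (hx : x ≠ 0) (hy : y ≠ 0)
    (bar ast : K → K → K)
    (hbar : ∀ u w : K, bar u w = x⁻¹ * (w - y * u))
    (hast : ∀ u w : K, ast u w = y⁻¹ * (w - x * u))
    (a : ℕ → K) (ha : ∀ n : ℕ, 1 ≤ n → a n = (x + y) ^ (n - 1)) :
    (∀ n : ℕ, 1 ≤ n → bar (a n) (a (n + 1)) = a n) ∧
    (∀ n : ℕ, 1 ≤ n → ast (a n) (a (n + 1)) = a n) ∧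
    (∀ p q r s : K, bar (bar p q) (bar r s) = bar (bar p r) (bar q s)) ∧
    (∀ p q r s : K, ast (bar p q) (bar r s) = bar (ast p r) (ast q s)) ∧
    (∀ p q r s : K, ast (ast p q) (ast r s) = ast (ast p r) (ast q s)) ∧
    (∀ p q : K, ast (bar p q) q = p) ∧
    (∀ p q : K, bar (ast p q) q = p) := by
  refine ⟨?_, ?_, ?_, ?_, ?_, ?_, ?_⟩
  · intro n hn
    obtain ⟨m, rfl⟩ := Nat.exists_eq_add_of_le hn
    simp only [hbar, ha (1 + m) hn, ha _ (by omega : (1:ℕ) ≤ 1 + m + 1),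
      Nat.add_sub_cancel, show 1 + m + 1 - 1 = m + 1 from by omega,
      show 1 + m - 1 = m from by omega, pow_succ]
    field_simp
    ring
  · intro n hn
    obtain ⟨m, rfl⟩ := Nat.exists_eq_add_of_le hn
    simp only [hast, ha (1 + m) hn, ha _ (by omega : (1:ℕ) ≤ 1 + m + 1),
      Nat.add_sub_cancel, show 1 + m + 1 - 1 = m + 1 from by omega,
      show 1 + m - 1 = m from by omega, pow_succ]
    field_simp
    ring
  all_goals intros; simp only [hbar, hast]; field_simp; try ring
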